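/- Let n, N ≥ 1; let ŵ : Fin N → ℝ satisfy Σᵢ ŵ i = 1; let x : Fin N → (Fin n → ℝ) be samples; let mᵗ, s_c ∈ Fin n → ℝ; let η_m, η_c, λ₀ ≥ 0 be reals; set z_m := η_m + 1, z_c := η_c + λ₀ + 1, dᵢ := x i − mᵗ, d_w := Σᵢ (ŵ i) • dᵢ, D_w := Σᵢ (ŵ i) • (dᵢ ⬝ dᵢᵀ), β := z_m⁻¹ • d_w, and let Cᵗ be an n × n real matrix. For vectors u, v write u ∘ v := u ⬝ vᵀ + v ⬝ uᵀ. Then the unique pair (m', C') satisfying the system (a) Σᵢ (ŵ i) • (x i − m') + η_m • (mᵗ − m') = 0 and (b) Σᵢ (ŵ i) • ((x i − m') ⬝ (x i − m')ᵀ − C') + η_c • ((mᵗ − m') ⬝ (mᵗ − m')ᵀ + Cᵗ − C') + λ₀ • ((s_c + mᵗ − m') ⬝ (s_c + mᵗ − m')ᵀ − C') = 0 is given by m' = mᵗ + z_m⁻¹ • d_w and C' = (η_c/z_c) • Cᵗ + (1/z_c) • D_w + (λ₀/z_c) • (s_c ⬝ s_cᵀ) − (λ₀/(z_c·z_m)) •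 (d_w ∘ s_c) − (1/(z_c·z_m))·(2 − z_c/z_m) • (d_w ⬝ d_wᵀ). -/

import Mathlib

open Matrix

section auxVMV
variable {n : ℕ}

private lemma vmv_sub_left (a b c : Fin n → ℝ) :
    vecMulVec (a - b) c = vecMulVec a c - vecMulVec b c := by
  ext i j; simp [vecMulVec_apply]; ring

private lemma vmv_sub_right (a b c : Fin n → ℝ) :
    vecMulVec a (b - c) = vecMulVec a b - vecMulVec a c := by
  ext i j; simp [vecMulVec_apply]; ring

private lemma vmv_neg_left (a b : Fin n → ℝ) :
    vecMulVec (-a) b = -vecMulVec a b := by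
  ext i j; simp [vecMulVec_apply]

private lemma vmv_neg_right (a b : Fin n → ℝ) :
    vecMulVec a (-b) = -vecMulVec a b := by
  ext i j; simp [vecMulVec_apply]

private lemma vmv_smul_left (r : ℝ) (a b : Fin n → ℝ) :
    vecMulVec (r • a) b = r • vecMulVec a b := by
  ext i j; simp [vecMulVec_apply]; ring

private lemma vmv_smul_right (r : ℝ) (a b : Fin n → ℝ) :
    vecMulVec a (r • b) = r • vecMulVec a b := by
  ext i j; simp [vecMulVec_apply]; ring

private lemma vmv_sum_left {N : ℕ} (w : Fin N → ℝ) (d : Fin N → Fin n → ℝ) (c : Fin n → ℝ) :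
    vecMulVec (∑ i, w i • d i) c = ∑ i, w i • vecMulVec (d i) c := by
  ext a b
  simp only [vecMulVec_apply, Matrix.sum_apply, Matrix.smul_apply, Finset.sum_apply,
    Pi.smul_apply, smul_eq_mul, Finset.sum_mul]
  exact Finset.sum_congr rfl fun i _ => by ring

private lemma vmv_sum_right {N : ℕ} (w : Fin N → ℝ) (d : Fin N → Fin n → ℝ) (c : Fin n → ℝ) :
    vecMulVec c (∑ i, w i • d i) = ∑ i, w i • vecMulVec c (d i) := by
  ext a b
  simp only [vecMulVec_apply, Matrix.sum_apply, Matrix.smul_apply, Finset.sum_apply,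
    Pi.smul_apply, smul_eq_mul, Finset.mul_sum]
  exact Finset.sum_congr rfl fun i _ => by ring

end auxVMV

theorem stmt_14 {n N : ℕ} (hn : 1 ≤ n) (hN : 1 ≤ N)
    (w : Fin N → ℝ) (hw : ∑ i, w i = 1)
    (x : Fin N → Fin n → ℝ) (mt s_c : Fin n → ℝ)
    (η_m η_c l₀ : ℝ) (hηm : 0 ≤ η_m) (hηc : 0 ≤ η_c) (hl : 0 ≤ l₀)
    (z_m z_c : ℝ) (hzm : z_m = η_m + 1) (hzc : z_c = η_c + l₀ + 1)
    (d : Fin N → Fin n → ℝ) (hd : ∀ i, d i = x i - mt)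
    (d_w : Fin n → ℝ) (hdw : d_w = ∑ i, w i • d i)
    (D_w : Matrix (Fin n) (Fin n) ℝ)
    (hDw : D_w = ∑ i, w i • Matrix.vecMulVec (d i) (d i))
    (β : Fin n → ℝ) (hβ : β = z_m⁻¹ • d_w)
    (Ct : Matrix (Fin n) (Fin n) ℝ) :
    ∀ (m' : Fin n → ℝ) (C' : Matrix (Fin n) (Fin n) ℝ),
      (((∑ i, w i • (x i - m')) + η_m • (mt - m') = 0) ∧
        ((∑ i, w i • (Matrix.vecMulVec (x i - m') (x i - m') - C'))
          + η_c • (Matrix.vecMulVec (mt - m') (mt - m') + Ct - C')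
          + l₀ • (Matrix.vecMulVec (s_c + mt - m') (s_c + mt - m') - C') = 0))
      ↔ (m' = mt + z_m⁻¹ • d_w ∧
          C' = (η_c / z_c) • Ct + (1 / z_c) • D_w
            + (l₀ / z_c) • Matrix.vecMulVec s_c s_c
            - (l₀ / (z_c * z_m)) •
                (Matrix.vecMulVec d_w s_c + Matrix.vecMulVec s_c d_w)
            - ((1 / (z_c * z_m)) * (2 - z_c / z_m)) • Matrix.vecMulVec d_w d_w) := by
  subst hzm hzc
  have hzm0 : (η_m + 1 : ℝ) ≠ 0 := by positivity
  have hzc0 : (η_c + l₀ + 1 : ℝ) ≠ 0 := by positivity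
  intro m' C'
  set Cval : Matrix (Fin n) (Fin n) ℝ :=
    (η_c / (η_c + l₀ + 1)) • Ct + (1 / (η_c + l₀ + 1)) • D_w
      + (l₀ / (η_c + l₀ + 1)) • Matrix.vecMulVec s_c s_c
      - (l₀ / ((η_c + l₀ + 1) * (η_m + 1))) •
          (Matrix.vecMulVec d_w s_c + Matrix.vecMulVec s_c d_w)
      - ((1 / ((η_c + l₀ + 1) * (η_m + 1))) * (2 - (η_c + l₀ + 1) / (η_m + 1))) •
          Matrix.vecMulVec d_w d_w with hCval
  -- mean equation
  have hsum : (∑ i, w i • (x i - m')) = d_w + (mt - m') := by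
    rw [hdw]
    rw [Finset.sum_congr rfl fun i (_ : i ∈ Finset.univ) =>
      (show w i • (x i - m') = w i • d i + w i • (mt - m') by
        rw [hd, ← smul_add]; congr 1; abel)]
    rw [Finset.sum_add_distrib, ← Finset.sum_smul, hw, one_smul]
  have hA : ((∑ i, w i • (x i - m')) + η_m • (mt - m') = 0) ↔ m' = mt + β := by
    rw [hsum, hβ]
    constructor
    · intro h
      have h2 : (η_m + 1) • (mt - m') = -d_w := by
        linear_combination (norm := module) h
      have h3 : mt - m' = (η_m + 1)⁻¹ • -d_w := by
        rw [← h2, smul_smul, inv_mul_cancel₀ hzm0, one_smul]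
      linear_combination (norm := module) -h3
    · intro h
      subst h
      match_scalars <;> field_simp <;> ring
  -- covariance equation with m' = mt + β
  have S : ∀ C'' : Matrix (Fin n) (Fin n) ℝ,
      (∑ i, w i • (vecMulVec (d i - β) (d i - β) - C''))
        = D_w - vecMulVec d_w β - vecMulVec β d_w + (vecMulVec β β - C'') := by
    intro C''
    rw [Finset.sum_congr rfl fun i (_ : i ∈ Finset.univ) =>
      (show w i • (vecMulVec (d i - β) (d i - β) - C'')
          = (w i • vecMulVec (d i) (d i) - w i • vecMulVec (d i) β)
            - w i • vecMulVec β (d i) + w i • (vecMulVec β β - C'') by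
        rw [vmv_sub_left, vmv_sub_right, vmv_sub_right]
        module)]
    rw [Finset.sum_add_distrib, Finset.sum_sub_distrib, Finset.sum_sub_distrib,
      ← Finset.sum_smul, hw, one_smul, ← hDw,
      show (∑ i, w i • vecMulVec (d i) β) = vecMulVec d_w β by
        rw [hdw, vmv_sum_left],
      show (∑ i, w i • vecMulVec β (d i)) = vecMulVec β d_w by
        rw [hdw, vmv_sum_right]]
  have key : ∀ C'' : Matrix (Fin n) (Fin n) ℝ,
      ((∑ i, w i • (vecMulVec (x i - (mt + β)) (x i - (mt + β)) - C''))
        + η_c • (vecMulVec (mt - (mt + β)) (mt - (mt + β)) + Ct - C'')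
        + l₀ • (vecMulVec (s_c + mt - (mt + β)) (s_c + mt - (mt + β)) - C''))
      = (η_c + l₀ + 1) • (Cval - C'') := by
    intro C''
    have hx : ∀ i, x i - (mt + β) = d i - β := fun i => by rw [hd]; abel
    simp only [hx, show mt - (mt + β) = -β from by abel,
      show s_c + mt - (mt + β) = s_c - β from by abel]
    rw [S C'', hCval, hβ]
    simp only [vmv_sub_left, vmv_sub_right, vmv_neg_left, vmv_neg_right,
      vmv_smul_left, vmv_smul_right]
    match_scalars <;> field_simp <;> ring
  constructor
  · rintro ⟨ha, hb⟩
    have hm' : m' = mt + β := hA.mp ha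
    refine ⟨by rw [hm', hβ], ?_⟩
    rw [hm', key C'] at hb
    rcases smul_eq_zero.mp hb with h | h
    · exact absurd h hzc0
    · exact (sub_eq_zero.mp h).symm
  · rintro ⟨hm', hC'⟩
    have hm'' : m' = mt + β := by rw [hβ]; exact hm'
    refine ⟨hA.mpr hm'', ?_⟩
    rw [hm'', key C', hC']
    simp
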